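/- Let K be a field of characteristic 0 and A = ⊕_{i=0}^n A_i a finite-dimensional graded commutative K-algebra which is generated as a K-algebra by its degree-one component A_1, has dim_K A_0 = dim_K A_n = 1 with the unit in A_0, and satisfies Poincaré duality: for each 0 ≤ i ≤ n the multiplication pairing A_i × A_{n−i} → A_n is non-degenerate. Fix a K-basis v_1,…,v_r of A_1 and a K-linear isomorphism φ: A_n → K, and let f ∈ K[x_1,…,x_r] be the unique polynomial (homogeneous of degree n) with f(a_1,…,a_r) = φ((a_1 v_1 + ⋯ + a_r v_r)^n) for all (a_1,…,a_r) ∈ K^r. Then A is isomorphic as a graded K-algebra to K[t_1,…,t_r]/J, where each t_i has degree 1 and J = {p ∈ K[t_1,…,t_r] : p(∂/∂x_1,…,∂/∂x_r) f = 0} is the ideal of polynomials p such that the constant-coefficient differential operator obtained from p by substituting ∂/∂x_i for t_i annihilates f. -/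

import Mathlib

open MvPolynomial

/-- The iterated partial derivative `∂^α = ∂₁^{α₁} ⋯ ∂ᵣ^{αᵣ}` applied to a polynomial
(the partial derivatives commute, so the order of application is immaterial). -/
noncomputable def iterPDeriv {K : Type*} [CommSemiring K] {r : ℕ}
    (α : Fin r →₀ ℕ) (f : MvPolynomial (Fin r) K) : MvPolynomial (Fin r) K :=
  (List.finRange r).foldr (fun i g => (fun h => MvPolynomial.pderiv i h)^[α i] g) f

/-- The constant-coefficient differential operator `p(∂/∂x₁, …, ∂/∂xᵣ)` obtained from a
polynomial `p` by substituting `∂/∂xᵢ` for `tᵢ`, applied to the polynomial `f`. -/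
noncomputable def diffOpApply {K : Type*} [CommSemiring K] {r : ℕ}
    (p f : MvPolynomial (Fin r) K) : MvPolynomial (Fin r) K :=
  ∑ α ∈ p.support, p.coeff α • iterPDeriv α f


namespace PKaux

variable {K : Type*} [CommSemiring K] {σ : Type*}

theorem pderiv_comm (i j : σ) (h : MvPolynomial σ K) :
    pderiv i (pderiv j h) = pderiv j (pderiv i h) := by
  classical
  induction h using MvPolynomial.induction_on' with
  | add p q hp hq => simp [hp, hq]
  | monomial s a =>
    rcases eq_or_ne i j with rfl | hij
    · rfl
    · simp only [pderiv_monomial]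
      rw [tsub_right_comm]
      congr 1
      have h1 : ((s - Finsupp.single j 1 : σ →₀ ℕ)) i = s i := by
        rw [Finsupp.tsub_apply, Finsupp.single_eq_of_ne' (Ne.symm hij), Nat.sub_zero]
      have h2 : ((s - Finsupp.single i 1 : σ →₀ ℕ)) j = s j := by
        rw [Finsupp.tsub_apply, Finsupp.single_eq_of_ne' hij, Nat.sub_zero]
      rw [h1, h2]; ring

theorem iter_pderiv_comm (i j : σ) (a b : ℕ) (h : MvPolynomial σ K) :
    (fun x => pderiv i x)^[a] ((fun x => pderiv j x)^[b] h)
      = (fun x => pderiv j x)^[b] ((fun x => pderiv i x)^[a] h) := by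
  have : Function.Commute (fun x => pderiv i x) (fun x => (pderiv j : Derivation K _ _) x) :=
    fun x => pderiv_comm i j x
  exact (this.iterate_iterate a b) h

theorem iter_pderiv_add (i : σ) (a : ℕ) (g h : MvPolynomial σ K) :
    (fun x => pderiv i x)^[a] (g + h)
      = (fun x => pderiv i x)^[a] g + (fun x => pderiv i x)^[a] h := by
  induction a generalizing g h with
  | zero => rfl
  | succ a ih => simp only [Function.iterate_succ_apply, map_add, ih]

theorem pderiv_algebra_smul {S : Type*} [CommSemiring S] [Algebra S K]
    (i : σ) (c : S) (h : MvPolynomial σ K) :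
    pderiv i (c • h) = c • pderiv i h := by
  rw [Algebra.smul_def, Algebra.smul_def, MvPolynomial.algebraMap_apply,
    pderiv_C_mul]

theorem iter_pderiv_smul {S : Type*} [CommSemiring S] [Algebra S K]
    (i : σ) (a : ℕ) (c : S) (h : MvPolynomial σ K) :
    (fun x => pderiv i x)^[a] (c • h) = c • (fun x => pderiv i x)^[a] h := by
  induction a generalizing h with
  | zero => rfl
  | succ a ih =>
    simp only [Function.iterate_succ_apply]
    rw [pderiv_algebra_smul, ih]

theorem iter_pderiv_zero (i : σ) (a : ℕ) :
    (fun x => pderiv i x)^[a] (0 : MvPolynomial σ K) = 0 := by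
  induction a with
  | zero => rfl
  | succ a ih => simp only [Function.iterate_succ_apply, map_zero, ih]

end PKaux

namespace PKaux

variable {K : Type*} [CommSemiring K] {r : ℕ}

private noncomputable def step (α : Fin r →₀ ℕ) (i : Fin r) (g : MvPolynomial (Fin r) K) :
    MvPolynomial (Fin r) K := (fun h => pderiv i h)^[α i] g

theorem iterPDeriv_eq_foldr (α : Fin r →₀ ℕ) (f : MvPolynomial (Fin r) K) :
    iterPDeriv α f = (List.finRange r).foldr (step α) f := rfl

theorem foldr_swap (l : List (Fin r)) (j : Fin r) (k : ℕ) (hj : j ∉ l)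
    (α : Fin r →₀ ℕ) (f : MvPolynomial (Fin r) K) :
    l.foldr (step α) ((fun h => pderiv j h)^[k] f)
      = (fun h => pderiv j h)^[k] (l.foldr (step α) f) := by
  induction l with
  | nil => rfl
  | cons i l ih =>
    have hji : j ≠ i := fun h => hj (h ▸ List.mem_cons_self)
    have hjl : j ∉ l := fun h => hj (List.mem_cons_of_mem _ h)
    simp only [List.foldr_cons, ih hjl, step]
    exact iter_pderiv_comm i j (α i) k _

theorem foldr_add (l : List (Fin r)) (α : Fin r →₀ ℕ) (f g : MvPolynomial (Fin r) K) :
    l.foldr (step α) (f + g) = l.foldr (step α) f + l.foldr (step α) g := by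
  induction l with
  | nil => rfl
  | cons i l ih => simp only [List.foldr_cons, ih, step, iter_pderiv_add]

theorem foldr_smul {S : Type*} [CommSemiring S] [Algebra S K]
    (l : List (Fin r)) (α : Fin r →₀ ℕ) (c : S) (f : MvPolynomial (Fin r) K) :
    l.foldr (step α) (c • f) = c • l.foldr (step α) f := by
  induction l with
  | nil => rfl
  | cons i l ih => simp only [List.foldr_cons, ih, step, iter_pderiv_smul]

theorem foldr_zero (l : List (Fin r)) (α : Fin r →₀ ℕ) :
    l.foldr (step α) (0 : MvPolynomial (Fin r) K) = 0 := by
  induction l with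
  | nil => rfl
  | cons i l ih => simp only [List.foldr_cons, ih, step, iter_pderiv_zero]

theorem foldr_of_zero (l : List (Fin r)) (α : Fin r →₀ ℕ) (h : ∀ i ∈ l, α i = 0)
    (f : MvPolynomial (Fin r) K) : l.foldr (step α) f = f := by
  induction l with
  | nil => rfl
  | cons i l ih =>
    simp only [List.foldr_cons, ih fun x hx => h x (List.mem_cons_of_mem _ hx), step,
      h i (List.mem_cons_self), Function.iterate_zero, id]

theorem foldr_addexp (l : List (Fin r)) (hl : l.Nodup) (α β : Fin r →₀ ℕ)
    (f : MvPolynomial (Fin r) K) :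
    l.foldr (step (α + β)) f = l.foldr (step α) (l.foldr (step β) f) := by
  induction l with
  | nil => rfl
  | cons i l ih =>
    obtain ⟨hil, hl⟩ := List.nodup_cons.mp hl
    simp only [List.foldr_cons, step, Finsupp.add_apply, Function.iterate_add_apply]
    rw [ih hl, ← foldr_swap l i (β i) hil α]

theorem iterPDeriv_add_exp (α β : Fin r →₀ ℕ) (f : MvPolynomial (Fin r) K) :
    iterPDeriv (α + β) f = iterPDeriv α (iterPDeriv β f) :=
  foldr_addexp _ (List.nodup_finRange r) α β f

theorem iterPDeriv_add (α : Fin r →₀ ℕ) (f g : MvPolynomial (Fin r) K) :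
    iterPDeriv α (f + g) = iterPDeriv α f + iterPDeriv α g := foldr_add _ α f g

theorem iterPDeriv_smul {S : Type*} [CommSemiring S] [Algebra S K]
    (α : Fin r →₀ ℕ) (c : S) (f : MvPolynomial (Fin r) K) :
    iterPDeriv α (c • f) = c • iterPDeriv α f := foldr_smul _ α c f

theorem iterPDeriv_zero_poly (α : Fin r →₀ ℕ) :
    iterPDeriv α (0 : MvPolynomial (Fin r) K) = 0 := foldr_zero _ α

theorem iterPDeriv_zero (f : MvPolynomial (Fin r) K) : iterPDeriv 0 f = f :=
  foldr_of_zero _ _ (fun _ _ => rfl) f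

theorem foldr_single (j : Fin r) (k : ℕ) (f : MvPolynomial (Fin r) K)
    (l : List (Fin r)) (hnd : l.Nodup) (hmem : j ∈ l) :
    l.foldr (step (Finsupp.single j k)) f = (fun h => pderiv j h)^[k] f := by
  induction l with
  | nil => exact absurd hmem List.not_mem_nil
  | cons i l ih =>
    obtain ⟨hil, hl⟩ := List.nodup_cons.mp hnd
    rcases eq_or_ne i j with rfl | hij
    · simp only [List.foldr_cons, step, Finsupp.single_eq_same]
      rw [foldr_of_zero l _ fun x hx => Finsupp.single_eq_of_ne' (fun h => hil (by rw [h]; exact hx))]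
    · simp only [List.foldr_cons, step, Finsupp.single_eq_of_ne' (Ne.symm hij),
        Function.iterate_zero, id]
      exact ih hl ((List.mem_cons.mp hmem).resolve_left (fun h => hij h.symm))

theorem iterPDeriv_single (j : Fin r) (k : ℕ) (f : MvPolynomial (Fin r) K) :
    iterPDeriv (Finsupp.single j k) f = (fun h => pderiv j h)^[k] f :=
  foldr_single j k f _ (List.nodup_finRange r) (List.mem_finRange j)

end PKaux

namespace PKaux

section Coeffs

variable {K : Type*} [CommSemiring K] {σ : Type*}

theorem coeff_pderiv (γ : σ →₀ ℕ) (j : σ) (h : MvPolynomial σ K) :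
    coeff γ (pderiv j h) = (γ j + 1) • coeff (γ + Finsupp.single j 1) h := by
  induction h using MvPolynomial.induction_on' with
  | add p q hp hq => simp [hp, hq]
  | monomial s a =>
    classical
    rw [pderiv_monomial, coeff_monomial, coeff_monomial]
    by_cases hc : s = γ + Finsupp.single j 1
    · subst hc
      have h1 : γ + Finsupp.single j 1 - Finsupp.single j 1 = γ := by simp
      have h2 : ((γ + Finsupp.single j 1 : σ →₀ ℕ)) j = γ j + 1 := by
        rw [Finsupp.add_apply, Finsupp.single_eq_same]
      rw [if_pos h1, if_pos rfl, h2, nsmul_eq_mul, mul_comm, Nat.cast_add, Nat.cast_one]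
    · rw [if_neg hc, smul_zero]
      by_cases hd : s - Finsupp.single j 1 = γ
      · have hsj : s j = 0 := by
          by_contra hsj
          exact hc ((tsub_eq_iff_eq_add_of_le
            (Finsupp.single_le_iff.mpr (Nat.one_le_iff_ne_zero.mpr hsj))).mp hd)
        rw [if_pos hd, hsj, Nat.cast_zero, mul_zero]
      · rw [if_neg hd]

theorem coeff_iter_pderiv (j : σ) (k : ℕ) (γ : σ →₀ ℕ) (h : MvPolynomial σ K) :
    coeff γ ((fun x => pderiv j x)^[k] h)
      = (∏ t ∈ Finset.range k, (γ j + 1 + t)) • coeff (γ + Finsupp.single j k) h := by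
  induction k generalizing γ with
  | zero => simp
  | succ k ih =>
    rw [Function.iterate_succ_apply', coeff_pderiv, ih (γ + Finsupp.single j 1), smul_smul]
    have hidx : γ + Finsupp.single j 1 + Finsupp.single j k = γ + Finsupp.single j (k + 1) := by
      rw [add_assoc, ← Finsupp.single_add, Nat.add_comm 1 k]
    rw [hidx]
    congr 1
    rw [Finset.prod_range_succ']
    have : ∀ t, γ j + 1 + (t + 1) = ((γ + Finsupp.single j 1 : σ →₀ ℕ)) j + 1 + t := by
      intro t
      rw [Finsupp.add_apply, Finsupp.single_eq_same]
      omega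
    rw [mul_comm]
    congr 1
    exact Finset.prod_congr rfl fun t _ => (this t).symm

end Coeffs

section CoeffsFin

variable {K : Type*} [CommSemiring K] {r : ℕ}

theorem coeff_iterPDeriv (β : Fin r →₀ ℕ) (γ : Fin r →₀ ℕ) (h : MvPolynomial (Fin r) K) :
    coeff γ (iterPDeriv β h)
      = (∏ i, ∏ t ∈ Finset.range (β i), (γ i + 1 + t)) • coeff (γ + β) h := by
  induction β using Finsupp.induction generalizing γ with
  | zero => simp [iterPDeriv_zero]
  | single_add j k β' hj hk ih =>
    have hbj : β' j = 0 := Finsupp.notMem_support_iff.mp hj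
    rw [iterPDeriv_add_exp, iterPDeriv_single, coeff_iter_pderiv, ih, smul_smul]
    have hidx : γ + Finsupp.single j k + β' = γ + (Finsupp.single j k + β') := by
      rw [add_assoc]
    rw [hidx]
    congr 1
    have hinner : (∏ i, ∏ t ∈ Finset.range (β' i), ((γ + Finsupp.single j k) i + 1 + t))
        = ∏ i, ∏ t ∈ Finset.range (β' i), (γ i + 1 + t) := by
      refine Finset.prod_congr rfl fun i _ => ?_
      rcases eq_or_ne i j with rfl | hij
      · rw [hbj]; simp
      · have : (γ + Finsupp.single j k) i = γ i := by
          rw [Finsupp.add_apply, Finsupp.single_eq_of_ne' (Ne.symm hij), Nat.add_zero]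
        rw [this]
    rw [hinner]
    rw [Finset.prod_eq_mul_prod_sdiff_singleton_of_mem (Finset.mem_univ j)
        (fun i => ∏ t ∈ Finset.range ((Finsupp.single j k + β') i) , (γ i + 1 + t)),
      Finset.prod_eq_mul_prod_sdiff_singleton_of_mem (Finset.mem_univ j)
        (fun i => ∏ t ∈ Finset.range (β' i), (γ i + 1 + t))]
    have hj1 : (Finsupp.single j k + β') j = k := by
      rw [Finsupp.add_apply, Finsupp.single_eq_same, hbj, Nat.add_zero]
    rw [hj1, hbj]
    simp only [Finset.range_zero, Finset.prod_empty, mul_one]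
    have hcong : (∏ i ∈ Finset.univ \ {j},
          ∏ t ∈ Finset.range ((Finsupp.single j k + β') i), (γ i + 1 + t))
        = ∏ i ∈ Finset.univ \ {j}, ∏ t ∈ Finset.range (β' i), (γ i + 1 + t) := by
      refine Finset.prod_congr rfl fun i hi => ?_
      have hij : i ≠ j := by
        intro h; subst h; simp at hi
      have : ((Finsupp.single j k + β' : (Fin r) →₀ ℕ)) i = β' i := by
        rw [Finsupp.add_apply, Finsupp.single_eq_of_ne' (Ne.symm hij), Nat.zero_add]
      rw [this]
    rw [hcong]
    ring

end CoeffsFin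

end PKaux

namespace PKaux

section DiffOp

variable {K : Type*} [CommSemiring K] {r : ℕ}

theorem diffOpApply_eq_sum_subset {s : Finset (Fin r →₀ ℕ)} (p f : MvPolynomial (Fin r) K)
    (hs : p.support ⊆ s) :
    diffOpApply p f = ∑ α ∈ s, coeff α p • iterPDeriv α f := by
  rw [diffOpApply]
  exact Finset.sum_subset hs (fun α _ hα => by
    rw [MvPolynomial.notMem_support_iff.mp hα, zero_smul])

theorem diffOpApply_add_left (p q f : MvPolynomial (Fin r) K) :
    diffOpApply (p + q) f = diffOpApply p f + diffOpApply q f := by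
  classical
  rw [diffOpApply_eq_sum_subset (p + q) f MvPolynomial.support_add,
    diffOpApply_eq_sum_subset p f Finset.subset_union_left,
    diffOpApply_eq_sum_subset q f Finset.subset_union_right, ← Finset.sum_add_distrib]
  exact Finset.sum_congr rfl fun α _ => by rw [coeff_add, add_smul]

theorem diffOpApply_monomial (α : Fin r →₀ ℕ) (c : K) (f : MvPolynomial (Fin r) K) :
    diffOpApply (monomial α c) f = c • iterPDeriv α f := by
  classical
  by_cases hc : c = 0
  · subst hc
    rw [zero_smul]
    simp [diffOpApply, MvPolynomial.support_monomial]
  · rw [diffOpApply, MvPolynomial.support_monomial, if_neg hc, Finset.sum_singleton,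
      MvPolynomial.coeff_monomial, if_pos rfl]

theorem diffOpApply_zero_left (f : MvPolynomial (Fin r) K) : diffOpApply 0 f = 0 := by
  simp [diffOpApply]

theorem diffOpApply_zero_right (p : MvPolynomial (Fin r) K) : diffOpApply p 0 = 0 := by
  simp [diffOpApply, iterPDeriv_zero_poly]

theorem diffOpApply_add_right (p f g : MvPolynomial (Fin r) K) :
    diffOpApply p (f + g) = diffOpApply p f + diffOpApply p g := by
  simp [diffOpApply, iterPDeriv_add, smul_add, Finset.sum_add_distrib]

theorem diffOpApply_smul_right {S : Type*} [CommSemiring S] [Algebra S K]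
    (p : MvPolynomial (Fin r) K) (c : S) (f : MvPolynomial (Fin r) K) :
    diffOpApply p (c • f) = c • diffOpApply p f := by
  rw [diffOpApply, diffOpApply, Finset.smul_sum]
  exact Finset.sum_congr rfl fun α _ => by rw [iterPDeriv_smul, smul_comm]

theorem diffOpApply_mul (p q f : MvPolynomial (Fin r) K) :
    diffOpApply (p * q) f = diffOpApply p (diffOpApply q f) := by
  induction p using MvPolynomial.induction_on' with
  | add p1 p2 h1 h2 => rw [add_mul, diffOpApply_add_left, h1, h2, diffOpApply_add_left]
  | monomial α c =>
    induction q using MvPolynomial.induction_on' with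
    | add q1 q2 g1 g2 =>
      rw [mul_add, diffOpApply_add_left, g1, g2, diffOpApply_add_left, diffOpApply_add_right]
    | monomial β d =>
      rw [monomial_mul, diffOpApply_monomial, diffOpApply_monomial, diffOpApply_monomial,
        iterPDeriv_add_exp, iterPDeriv_smul, mul_smul]

end DiffOp

end PKaux

namespace PKaux

section CoeffMap

variable {K A : Type*} [CommSemiring K] [CommSemiring A] [Algebra K A] {r : ℕ}

noncomputable def coeffMap (L : A →ₗ[K] K) (g : MvPolynomial (Fin r) A) :
    MvPolynomial (Fin r) K :=
  ∑ α ∈ g.support, monomial α (L (coeff α g))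

variable (L : A →ₗ[K] K)

theorem coeff_coeffMap (β : Fin r →₀ ℕ) (g : MvPolynomial (Fin r) A) :
    coeff β (coeffMap L g) = L (coeff β g) := by
  classical
  rw [coeffMap, MvPolynomial.coeff_sum]
  rw [Finset.sum_eq_single β (fun α _ hα => by rw [coeff_monomial, if_neg hα])
    (fun hβ => by rw [MvPolynomial.notMem_support_iff.mp hβ, map_zero, coeff_monomial,
      if_pos rfl]), coeff_monomial, if_pos rfl]

theorem coeffMap_add (g h : MvPolynomial (Fin r) A) :
    coeffMap L (g + h) = coeffMap L g + coeffMap L h := by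
  ext β
  simp only [coeff_coeffMap, coeff_add, map_add]

theorem coeffMap_smul (c : K) (g : MvPolynomial (Fin r) A) :
    coeffMap L (c • g) = c • coeffMap L g := by
  ext β
  simp only [coeff_coeffMap, MvPolynomial.coeff_smul, map_smul, smul_eq_mul]

theorem coeffMap_nsmul (c : ℕ) (g : MvPolynomial (Fin r) A) :
    coeffMap L (c • g) = c • coeffMap L g := by
  ext β
  simp only [coeff_coeffMap, MvPolynomial.coeff_smul, map_nsmul, smul_eq_mul]

theorem coeffMap_monomial (α : Fin r →₀ ℕ) (c : A) :
    coeffMap L (monomial α c) = monomial α (L c) := by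
  classical
  ext β
  rw [coeff_coeffMap, coeff_monomial, coeff_monomial]
  split_ifs <;> simp

theorem coeffMap_pderiv (j : Fin r) (g : MvPolynomial (Fin r) A) :
    coeffMap L (pderiv j g) = pderiv j (coeffMap L g) := by
  ext β
  rw [coeff_coeffMap, coeff_pderiv, coeff_pderiv, coeff_coeffMap, map_nsmul]

theorem coeffMap_iter_pderiv (j : Fin r) (k : ℕ) (g : MvPolynomial (Fin r) A) :
    coeffMap L ((fun x => pderiv j x)^[k] g) = (fun x => pderiv j x)^[k] (coeffMap L g) := by
  induction k generalizing g with
  | zero => rfl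
  | succ k ih => rw [Function.iterate_succ_apply, Function.iterate_succ_apply, ih,
      coeffMap_pderiv]

theorem coeffMap_foldr (l : List (Fin r)) (α : Fin r →₀ ℕ) (g : MvPolynomial (Fin r) A) :
    coeffMap L (l.foldr (step α) g) = l.foldr (step α) (coeffMap L g) := by
  induction l with
  | nil => rfl
  | cons i l ih => simp only [List.foldr_cons, step, ih, coeffMap_iter_pderiv]

theorem coeffMap_iterPDeriv (α : Fin r →₀ ℕ) (g : MvPolynomial (Fin r) A) :
    coeffMap L (iterPDeriv α g) = iterPDeriv α (coeffMap L g) :=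
  coeffMap_foldr L _ α g

theorem coeffMap_isHomogeneous {g : MvPolynomial (Fin r) A} {m : ℕ}
    (hg : g.IsHomogeneous m) : (coeffMap L g).IsHomogeneous m := by
  intro d hd
  refine hg fun h0 => hd ?_
  rw [coeff_coeffMap, h0, map_zero]

theorem eval_coeffMap (a : Fin r → K) (g : MvPolynomial (Fin r) A) :
    eval a (coeffMap L g) = L (eval (fun i => algebraMap K A (a i)) g) := by
  induction g using MvPolynomial.induction_on' with
  | add p q hp hq => rw [coeffMap_add, map_add, hp, hq, map_add, map_add]
  | monomial s c =>
    rw [coeffMap_monomial, eval_monomial, eval_monomial]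
    have hprod : (s.prod fun i e => algebraMap K A (a i) ^ e)
        = algebraMap K A (s.prod fun i e => a i ^ e) := by
      rw [Finsupp.prod, Finsupp.prod, map_prod]
      exact Finset.prod_congr rfl fun i _ => (map_pow _ _ _).symm
    rw [hprod, ← Algebra.commutes, ← Algebra.smul_def, map_smul, smul_eq_mul, mul_comm]

end CoeffMap

end PKaux

namespace PKaux

section Aux2

variable {K A : Type*} [CommSemiring K] [CommSemiring A] [Algebra K A] {r : ℕ}
variable (L : A →ₗ[K] K)

theorem coeffMap_zero : coeffMap L (0 : MvPolynomial (Fin r) A) = 0 := by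
  ext β
  rw [coeff_coeffMap]
  simp

theorem coeffMap_sum {ι : Type*} (s : Finset ι) (g : ι → MvPolynomial (Fin r) A) :
    coeffMap L (∑ i ∈ s, g i) = ∑ i ∈ s, coeffMap L (g i) := by
  classical
  induction s using Finset.cons_induction with
  | empty => simpa using coeffMap_zero L
  | cons i s hi ih => rw [Finset.sum_cons, Finset.sum_cons, coeffMap_add, ih]

theorem constantCoeff_coeffMap (g : MvPolynomial (Fin r) A) :
    constantCoeff (coeffMap L g) = L (constantCoeff g) := by
  rw [MvPolynomial.constantCoeff_eq, MvPolynomial.constantCoeff_eq]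
  exact coeff_coeffMap L 0 g

theorem isHomogeneous_support_degree {p : MvPolynomial (Fin r) K} {m : ℕ}
    (hp : p.IsHomogeneous m) {α : Fin r →₀ ℕ} (hα : α ∈ p.support) :
    ∑ i, α i = m := by
  have h := hp (MvPolynomial.mem_support_iff.mp hα)
  rw [Finsupp.weight_apply, Finsupp.sum] at h
  calc ∑ i, α i = ∑ a ∈ α.support, α a :=
        (Finset.sum_subset (Finset.subset_univ _)
          (fun i _ hi => Finsupp.notMem_support_iff.mp hi)).symm
    _ = ∑ a ∈ α.support, α a • (1 : Fin r → ℕ) a := by simp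
    _ = m := h

theorem C_smul (c : K) (x : A) :
    (MvPolynomial.C (c • x) : MvPolynomial (Fin r) A) = c • MvPolynomial.C x := by
  rw [Algebra.smul_def, map_mul, Algebra.smul_def]
  congr 1

end Aux2

end PKaux

/-- Theorem of Pukhlikov–Khovanskii.  Let `K` be a field of characteristic
`0` and `A = ⊕_{i=0}^n Aᵢ` a finite-dimensional graded commutative `K`-algebra generated by
`A₁`, with `dim A₀ = dim Aₙ = 1` and Poincaré duality.  Fix a basis `v₁, …, vᵣ` of `A₁` and a
linear isomorphism `φ : Aₙ ≃ K`, and let `f` be the unique polynomial with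
`f(a₁,…,aᵣ) = φ((a₁v₁ + ⋯ + aᵣvᵣ)ⁿ)`.  Then `f` is homogeneous of degree `n` and `A` is
isomorphic as a graded `K`-algebra to `K[t₁,…,tᵣ]/J`, where each `tᵢ` has degree `1` and
`J = {p : p(∂/∂x₁,…,∂/∂xᵣ) f = 0}` (the isomorphism being witnessed by a surjective graded
algebra homomorphism `ψ : K[t₁,…,tᵣ] → A` with kernel exactly `J`). -/
theorem stmt1 {K A : Type*} [Field K] [CharZero K] [CommRing A] [Algebra K A]
    (𝒜 : ℕ → Submodule K A) [GradedAlgebra 𝒜] [FiniteDimensional K A]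
    (n : ℕ)
    (hbound : ∀ i : ℕ, n < i → 𝒜 i = ⊥)
    (hgen : Algebra.adjoin K (𝒜 1 : Set A) = ⊤)
    (h0 : Module.finrank K (𝒜 0) = 1)
    (hn : Module.finrank K (𝒜 n) = 1)
    (hPD : ∀ i ≤ n, ∀ x ∈ 𝒜 i, (∀ y ∈ 𝒜 (n - i), x * y = 0) → x = 0)
    (r : ℕ) (v : Fin r → A)
    -- `v₁, …, vᵣ` is a `K`-basis of `A₁`:
    (hv1 : ∀ i, v i ∈ 𝒜 1)
    (hvli : LinearIndependent K v)
    (hvspan : Submodule.span K (Set.range v) = 𝒜 1)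
    (φ : (𝒜 n) ≃ₗ[K] K)
    (f : MvPolynomial (Fin r) K)
    (hf : ∀ a : Fin r → K, ∀ h : (∑ i, a i • v i) ^ n ∈ 𝒜 n,
      MvPolynomial.eval a f = φ ⟨(∑ i, a i • v i) ^ n, h⟩) :
    MvPolynomial.IsHomogeneous f n ∧
    ∃ ψ : MvPolynomial (Fin r) K →ₐ[K] A,
      Function.Surjective ψ ∧
      (∀ p : MvPolynomial (Fin r) K, ψ p = 0 ↔ diffOpApply p f = 0) ∧
      (∀ (d : ℕ) (p : MvPolynomial (Fin r) K), MvPolynomial.IsHomogeneous p d → ψ p ∈ 𝒜 d) := by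
  classical
  -- the linear functional `L = φ ∘ (projection onto 𝒜 n)`
  let L : A →ₗ[K] K :=
    { toFun := fun x => φ (DirectSum.decompose 𝒜 x n)
      map_add' := fun x y => by
        dsimp only
        rw [DirectSum.decompose_add, DirectSum.add_apply, map_add]
      map_smul' := fun c x => by
        dsimp only
        rw [DirectSum.decompose_smul, DirectSum.smul_apply, map_smul, RingHom.id_apply] }
  have hLmem : ∀ (x : A) (hx : x ∈ 𝒜 n), L x = φ ⟨x, hx⟩ := by
    intro x hx
    show φ _ = φ _
    congr 1
    exact Subtype.ext (DirectSum.decompose_of_mem_same 𝒜 hx)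
  have hLne : ∀ (m : ℕ) (x : A), x ∈ 𝒜 m → m ≠ n → L x = 0 := by
    intro m x hx hmn
    show φ _ = 0
    have h0' : DirectSum.decompose 𝒜 x n = 0 :=
      Subtype.ext (by simpa using DirectSum.decompose_of_mem_ne 𝒜 hx hmn)
    rw [h0', map_zero]
  -- the generic element and its powers
  set e : MvPolynomial (Fin r) A := ∑ i, (MvPolynomial.C (v i) * MvPolynomial.X i) with he_def
  have hpde : ∀ j, MvPolynomial.pderiv j e = MvPolynomial.C (v j) := by
    intro j
    rw [he_def, map_sum]
    rw [Finset.sum_eq_single j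
      (fun i _ hij => by rw [pderiv_C_mul, pderiv_X_of_ne hij, mul_zero])
      (fun h => absurd (Finset.mem_univ j) h)]
    rw [pderiv_C_mul, pderiv_X_self, mul_one]
  have hconst_e : MvPolynomial.constantCoeff e = 0 := by
    rw [he_def, map_sum]
    refine Finset.sum_eq_zero fun i _ => ?_
    rw [map_mul, constantCoeff_C, constantCoeff_X, mul_zero]
  have he_hom : e.IsHomogeneous 1 := by
    apply MvPolynomial.IsHomogeneous.sum
    intro i _
    simpa using (MvPolynomial.isHomogeneous_C (Fin r) (v i)).mul (MvPolynomial.isHomogeneous_X _ i)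
  set mp : (Fin r →₀ ℕ) → A := fun α => ∏ i, v i ^ α i with hmp_def
  have hmp_mem : ∀ α : Fin r →₀ ℕ, mp α ∈ 𝒜 (∑ i, α i) := by
    intro α
    have key : ∀ s : Finset (Fin r), (∏ i ∈ s, v i ^ α i) ∈ 𝒜 (∑ i ∈ s, α i) := by
      intro s
      induction s using Finset.cons_induction with
      | empty => simpa using SetLike.one_mem_graded 𝒜
      | cons i s hi ih =>
        rw [Finset.prod_cons, Finset.sum_cons]
        refine SetLike.mul_mem_graded ?_ ih
        simpa using SetLike.pow_mem_graded (α i) (hv1 i)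
    exact key Finset.univ
  have hψ_eq : ∀ p : MvPolynomial (Fin r) K,
      MvPolynomial.aeval v p = ∑ α ∈ p.support, MvPolynomial.coeff α p • mp α := by
    intro p
    conv_lhs => rw [p.as_sum]
    rw [map_sum]
    refine Finset.sum_congr rfl fun α _ => ?_
    rw [MvPolynomial.aeval_monomial, Algebra.smul_def]
    congr 1
    simp only [hmp_def]
    exact Finsupp.prod_fintype _ _ fun i => pow_zero (v i)
  have hψ_hom : ∀ (d : ℕ) (p : MvPolynomial (Fin r) K),
      p.IsHomogeneous d → MvPolynomial.aeval v p ∈ 𝒜 d := by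
    intro d p hp
    rw [hψ_eq]
    refine Submodule.sum_mem _ fun α hα => ?_
    have hm := hmp_mem α
    rw [PKaux.isHomogeneous_support_degree hp hα] at hm
    exact Submodule.smul_mem _ _ hm
  have hsurj : Function.Surjective (MvPolynomial.aeval v : MvPolynomial (Fin r) K →ₐ[K] A) := by
    have hr : (MvPolynomial.aeval v : MvPolynomial (Fin r) K →ₐ[K] A).range = ⊤ := by
      rw [← Algebra.adjoin_range_eq_range_aeval]
      rw [← hvspan, Algebra.adjoin_span] at hgen
      exact hgen
    intro x
    have hx : x ∈ (MvPolynomial.aeval v : MvPolynomial (Fin r) K →ₐ[K] A).range := by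
      rw [hr]; trivial
    exact hx
  have hdecomp : ∀ (q : MvPolynomial (Fin r) K) (j : ℕ),
      ((DirectSum.decompose 𝒜 (MvPolynomial.aeval v q) j : A))
        = MvPolynomial.aeval v (MvPolynomial.homogeneousComponent j q) := by
    intro q j
    conv_lhs => rw [← MvPolynomial.sum_homogeneousComponent q]
    rw [map_sum, DirectSum.decompose_sum]
    have hterm : ∀ i ∈ Finset.range (q.totalDegree + 1),
        ((DirectSum.decompose 𝒜 (MvPolynomial.aeval v (MvPolynomial.homogeneousComponent i q)) : DirectSum _ fun i => 𝒜 i) j : A)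
          = if i = j then MvPolynomial.aeval v (MvPolynomial.homogeneousComponent i q) else 0 := by
      intro i _
      by_cases hij : i = j
      · subst hij
        rw [if_pos rfl]
        exact DirectSum.decompose_of_mem_same 𝒜
          (hψ_hom i _ (MvPolynomial.homogeneousComponent_isHomogeneous i q))
      · rw [if_neg hij]
        exact DirectSum.decompose_of_mem_ne 𝒜
          (hψ_hom i _ (MvPolynomial.homogeneousComponent_isHomogeneous i q)) hij
    rw [DFinsupp.finset_sum_apply, AddSubmonoidClass.coe_finset_sum, Finset.sum_congr rfl hterm,
      Finset.sum_ite_eq' (Finset.range (q.totalDegree + 1)) j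
        (fun i => MvPolynomial.aeval v (MvPolynomial.homogeneousComponent i q))]
    by_cases hj : j ∈ Finset.range (q.totalDegree + 1)
    · rw [if_pos hj]
    · rw [if_neg hj,
        MvPolynomial.homogeneousComponent_eq_zero _ q (by simp only [Finset.mem_range] at hj; omega),
        map_zero]
  -- the master computation of iterated derivatives of `e ^ n`
  have master : ∀ (s : ℕ) (α : Fin r →₀ ℕ), (∑ i, α i) = s →
      iterPDeriv α (e ^ n)
        = Nat.descFactorial n s • (MvPolynomial.C (mp α) * e ^ (n - s)) := by
    intro s
    induction s with
    | zero =>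
      intro α hα
      have hα0 : α = 0 := by
        ext i
        exact (Finset.sum_eq_zero_iff.mp hα) i (Finset.mem_univ i)
      subst hα0
      rw [PKaux.iterPDeriv_zero]
      simp [hmp_def]
    | succ s ih =>
      intro α hα
      have hj : ∃ j, α j ≠ 0 := by
        by_contra hcon
        push_neg at hcon
        rw [Finset.sum_eq_zero (fun i _ => hcon i)] at hα
        omega
      obtain ⟨j, hj⟩ := hj
      have hle : Finsupp.single j 1 ≤ α :=
        Finsupp.single_le_iff.mpr (Nat.one_le_iff_ne_zero.mpr hj)
      set β := α - Finsupp.single j 1 with hβ_def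
      have hαβ : α = Finsupp.single j 1 + β := by
        rw [hβ_def, add_tsub_cancel_of_le hle]
      have hsum1 : (∑ i, (Finsupp.single j 1 : Fin r →₀ ℕ) i) = 1 := by
        rw [Finset.sum_eq_single j (fun i _ hij => Finsupp.single_eq_of_ne' (Ne.symm hij))
          (fun h => absurd (Finset.mem_univ j) h), Finsupp.single_eq_same]
      have hβs : (∑ i, β i) = s := by
        have hh : (∑ i, α i)
            = (∑ i, (Finsupp.single j 1 : Fin r →₀ ℕ) i) + ∑ i, β i := by
          conv_lhs => rw [hαβ]
          simp [Finsupp.add_apply, Finset.sum_add_distrib]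
        rw [hsum1] at hh
        omega
      have hmpα : mp (Finsupp.single j 1 + β) = mp β * v j := by
        simp only [hmp_def]
        simp only [Finsupp.add_apply, pow_add, Finset.prod_mul_distrib]
        rw [Finset.prod_eq_single j (fun i _ hij => by
            rw [Finsupp.single_eq_of_ne' (Ne.symm hij), pow_zero])
          (fun h => absurd (Finset.mem_univ j) h), Finsupp.single_eq_same, pow_one, mul_comm]
      rw [hαβ, PKaux.iterPDeriv_add_exp, PKaux.iterPDeriv_single]
      simp only [Function.iterate_one]
      rw [ih β hβs, map_nsmul, pderiv_C_mul, pderiv_pow, hpde j, hmpα, Nat.descFactorial_succ]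
      simp only [nsmul_eq_mul, Nat.cast_mul, map_mul, Nat.sub_sub]
      ring
  -- mem facts and `f = coeffMap L (e ^ n)`
  have hmem1 : ∀ a : Fin r → K, (∑ i, a i • v i) ∈ 𝒜 1 := fun a =>
    Submodule.sum_mem _ fun i _ => Submodule.smul_mem _ _ (hv1 i)
  have hmemn : ∀ a : Fin r → K, (∑ i, a i • v i) ^ n ∈ 𝒜 n := fun a => by
    simpa using SetLike.pow_mem_graded n (hmem1 a)
  have hfeq : f = PKaux.coeffMap L (e ^ n) := by
    apply MvPolynomial.funext
    intro a
    rw [PKaux.eval_coeffMap, hf a (hmemn a), map_pow]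
    have heval_e : MvPolynomial.eval (fun i => algebraMap K A (a i)) e = ∑ i, a i • v i := by
      rw [he_def, map_sum]
      refine Finset.sum_congr rfl fun i _ => ?_
      rw [map_mul, MvPolynomial.eval_C, MvPolynomial.eval_X, Algebra.smul_def, mul_comm]
    rw [heval_e, hLmem _ (hmemn a)]
  -- the master lemma for diffOpApply on homogeneous polynomials
  have master' : ∀ (d : ℕ) (p : MvPolynomial (Fin r) K), p.IsHomogeneous d →
      diffOpApply p f
        = PKaux.coeffMap L
            (Nat.descFactorial n d • (MvPolynomial.C (MvPolynomial.aeval v p) * e ^ (n - d))) := by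
    intro d p hp
    rw [hfeq, PKaux.diffOpApply_eq_sum_subset _ _ (Finset.Subset.refl _)]
    calc ∑ α ∈ p.support, MvPolynomial.coeff α p • iterPDeriv α (PKaux.coeffMap L (e ^ n))
        = ∑ α ∈ p.support, PKaux.coeffMap L (MvPolynomial.coeff α p • iterPDeriv α (e ^ n)) := by
          refine Finset.sum_congr rfl fun α _ => ?_
          rw [← PKaux.coeffMap_iterPDeriv, ← PKaux.coeffMap_smul]
      _ = PKaux.coeffMap L (∑ α ∈ p.support, MvPolynomial.coeff α p • iterPDeriv α (e ^ n)) :=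
          (PKaux.coeffMap_sum L _ _).symm
      _ = PKaux.coeffMap L
            (Nat.descFactorial n d • (MvPolynomial.C (MvPolynomial.aeval v p) * e ^ (n - d))) := by
          congr 1
          have hterm : ∀ α ∈ p.support, MvPolynomial.coeff α p • iterPDeriv α (e ^ n)
              = Nat.descFactorial n d
                  • ((MvPolynomial.coeff α p • MvPolynomial.C (mp α)) * e ^ (n - d)) := by
            intro α hα
            rw [master d α (PKaux.isHomogeneous_support_degree hp hα), smul_comm,
              smul_mul_assoc]
          rw [Finset.sum_congr rfl hterm, ← Finset.smul_sum, ← Finset.sum_mul, hψ_eq p, map_sum]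
          congr 2
          exact Finset.sum_congr rfl fun α _ => (PKaux.C_smul _ _).symm
  -- pairing values on homogeneous pieces
  have hBhom : ∀ (d m : ℕ) (p q : MvPolynomial (Fin r) K),
      p.IsHomogeneous d → q.IsHomogeneous m →
      MvPolynomial.constantCoeff (diffOpApply (p * q) f)
        = if d + m = n
            then (Nat.descFactorial n n : K) * L (MvPolynomial.aeval v p * MvPolynomial.aeval v q)
            else 0 := by
    intro d m p q hp hq
    rw [master' (d + m) (p * q) (hp.mul hq), PKaux.constantCoeff_coeffMap]
    by_cases hdm : d + m = n
    · rw [if_pos hdm, hdm, Nat.sub_self, pow_zero, mul_one, map_nsmul, constantCoeff_C,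
        map_nsmul, nsmul_eq_mul, map_mul]
    · rw [if_neg hdm]
      rcases Nat.lt_or_ge n (d + m) with hlt | hge
      · rw [Nat.descFactorial_eq_zero_iff_lt.mpr hlt, zero_smul, map_zero, map_zero]
      · have hpos : n - (d + m) ≠ 0 := by omega
        rw [map_nsmul, map_mul, constantCoeff_C, map_pow, hconst_e, zero_pow hpos, mul_zero,
          smul_zero, map_zero]
  -- additivity of the pairing functional
  have hPadd : ∀ {ι : Type} (s : Finset ι) (g : ι → MvPolynomial (Fin r) K),
      MvPolynomial.constantCoeff (diffOpApply (∑ i ∈ s, g i) f)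
        = ∑ i ∈ s, MvPolynomial.constantCoeff (diffOpApply (g i) f) := by
    intro ι s g
    induction s using Finset.cons_induction with
    | empty => simp [PKaux.diffOpApply_zero_left]
    | cons i s hi ih =>
      rw [Finset.sum_cons, PKaux.diffOpApply_add_left, map_add, ih, Finset.sum_cons]
  -- first equivalence
  have hQ1 : ∀ p : MvPolynomial (Fin r) K, diffOpApply p f = 0 ↔
      (∀ q, MvPolynomial.constantCoeff (diffOpApply (q * p) f) = 0) := by
    intro p
    constructor
    · intro h q
      rw [PKaux.diffOpApply_mul, h, PKaux.diffOpApply_zero_right, map_zero]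
    · intro h
      apply MvPolynomial.ext
      intro β
      rw [MvPolynomial.coeff_zero]
      have hb := h (MvPolynomial.monomial β 1)
      rw [PKaux.diffOpApply_mul, PKaux.diffOpApply_monomial, one_smul,
        MvPolynomial.constantCoeff_eq, PKaux.coeff_iterPDeriv] at hb
      simp only [Finsupp.coe_zero, Pi.zero_apply, zero_add] at hb
      rw [nsmul_eq_mul] at hb
      have hne : ((∏ i, ∏ t ∈ Finset.range (β i), (0 + 1 + t) : ℕ) : K) ≠ 0 := by
        rw [Nat.cast_ne_zero]
        refine Nat.pos_iff_ne_zero.mp ?_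
        refine Finset.prod_pos fun i _ => Finset.prod_pos fun t _ => by omega
      exact (mul_eq_zero.mp hb).resolve_left hne
  have hcomp0 : ∀ p : MvPolynomial (Fin r) K, MvPolynomial.aeval v p = 0 →
      ∀ j, MvPolynomial.aeval v (MvPolynomial.homogeneousComponent j p) = 0 := by
    intro p hp j
    rw [← hdecomp p j, hp]
    simp
  -- second equivalence
  have hQ2 : ∀ p : MvPolynomial (Fin r) K, MvPolynomial.aeval v p = 0 ↔
      (∀ q, MvPolynomial.constantCoeff (diffOpApply (q * p) f) = 0) := by
    intro p
    constructor
    · intro hp0 q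
      have expand : MvPolynomial.constantCoeff (diffOpApply (q * p) f)
          = ∑ i ∈ Finset.range (q.totalDegree + 1), ∑ jj ∈ Finset.range (p.totalDegree + 1),
              MvPolynomial.constantCoeff (diffOpApply
                (MvPolynomial.homogeneousComponent i q * MvPolynomial.homogeneousComponent jj p)
                f) := by
        conv_lhs => rw [← MvPolynomial.sum_homogeneousComponent q,
          ← MvPolynomial.sum_homogeneousComponent p, Finset.sum_mul_sum]
        rw [hPadd]
        exact Finset.sum_congr rfl fun i _ => hPadd _ _
      rw [expand]
      refine Finset.sum_eq_zero fun i _ => Finset.sum_eq_zero fun jj _ => ?_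
      rw [hBhom i jj _ _ (MvPolynomial.homogeneousComponent_isHomogeneous i q)
        (MvPolynomial.homogeneousComponent_isHomogeneous jj p), hcomp0 p hp0 jj, mul_zero,
        map_zero, mul_zero, ite_self]
    · intro h
      conv_lhs => rw [← MvPolynomial.sum_homogeneousComponent p]
      rw [map_sum]
      refine Finset.sum_eq_zero fun d hd => ?_
      rcases Nat.lt_or_ge n d with hnd | hdn
      · have hbot := hψ_hom d _ (MvPolynomial.homogeneousComponent_isHomogeneous d p)
        rw [hbound d hnd] at hbot
        simpa using hbot
      · refine hPD d hdn _ (hψ_hom d _ (MvPolynomial.homogeneousComponent_isHomogeneous d p)) ?_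
        intro y hy
        obtain ⟨q, rfl⟩ := hsurj y
        set q' := MvPolynomial.homogeneousComponent (n - d) q with hq'_def
        have hq'y : MvPolynomial.aeval v q' = MvPolynomial.aeval v q :=
          (hdecomp q (n - d)).symm.trans (DirectSum.decompose_of_mem_same 𝒜 hy)
        have hQ := h q'
        have expand2 : MvPolynomial.constantCoeff (diffOpApply (q' * p) f)
            = ∑ d' ∈ Finset.range (p.totalDegree + 1),
                MvPolynomial.constantCoeff (diffOpApply
                  (q' * MvPolynomial.homogeneousComponent d' p) f) := by
          conv_lhs => rw [← MvPolynomial.sum_homogeneousComponent p, Finset.mul_sum]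
          exact hPadd _ _
        rw [expand2] at hQ
        have hterm : ∀ d' ∈ Finset.range (p.totalDegree + 1),
            MvPolynomial.constantCoeff (diffOpApply
              (q' * MvPolynomial.homogeneousComponent d' p) f)
              = if d' = d then (Nat.descFactorial n n : K)
                  * L (MvPolynomial.aeval v q'
                      * MvPolynomial.aeval v (MvPolynomial.homogeneousComponent d' p))
                else 0 := by
          intro d' _
          rw [hBhom (n - d) d' _ _ (MvPolynomial.homogeneousComponent_isHomogeneous _ q)
            (MvPolynomial.homogeneousComponent_isHomogeneous d' p)]
          by_cases hd' : d' = d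
          · subst hd'
            rw [if_pos (by omega), if_pos rfl]
          · rw [if_neg (by omega), if_neg hd']
        rw [Finset.sum_congr rfl hterm, Finset.sum_ite_eq'] at hQ
        rw [if_pos hd] at hQ
        have hfac : (Nat.descFactorial n n : K) ≠ 0 := by
          rw [Nat.cast_ne_zero, Nat.descFactorial_self]
          exact Nat.factorial_ne_zero n
        have hL0 : L (MvPolynomial.aeval v q'
            * MvPolynomial.aeval v (MvPolynomial.homogeneousComponent d p)) = 0 :=
          (mul_eq_zero.mp hQ).resolve_left hfac
        rw [hq'y, mul_comm] at hL0
        have hzmem : MvPolynomial.aeval v (MvPolynomial.homogeneousComponent d p)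
            * MvPolynomial.aeval v q ∈ 𝒜 n := by
          have hmm := SetLike.mul_mem_graded
            (hψ_hom d _ (MvPolynomial.homogeneousComponent_isHomogeneous d p)) hy
          rwa [Nat.add_sub_cancel' hdn] at hmm
        rw [hLmem _ hzmem] at hL0
        exact congrArg Subtype.val (φ.map_eq_zero_iff.mp hL0)
  -- conclusion
  refine ⟨?_, MvPolynomial.aeval v, hsurj, fun p => (hQ2 p).trans (hQ1 p).symm, hψ_hom⟩
  rw [hfeq]
  exact PKaux.coeffMap_isHomogeneous L (by simpa using he_hom.pow n)
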